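/- arXiv:1505.01080 — 2 statements merged into one kernel-verified Lean document; each statement's English description precedes it below -/
import Mathlib

section
/- The overlattice N₊ = ℤ² + (1/5)(3,1)ℤ of ℤ² with diagonal form diag(20, −30) is an even integral lattice isomorphic to the lattice with Gram matrix [[6,6],[6,2]]. -/
/-- The bilinear form `diag(20, −30)` on `ℚ²`. -/
def bQp (x y : ℚ × ℚ) : ℚ := 20 * x.1 * y.1 - 30 * x.2 * y.2

/-- The overlattice `N₊ = ℤ² + (1/5)(3,1)ℤ` of `ℤ²` inside `ℚ²`. -/
def NplusLat : AddSubgroup (ℚ × ℚ) :=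
  AddSubgroup.closure {(1, 0), (0, 1), (3 / 5, 1 / 5)}

/-- The Gram form `[[6,6],[6,2]]` on `ℤ²`. -/
def gPlus (u v : ℤ × ℤ) : ℤ :=
  6 * u.1 * v.1 + 6 * u.1 * v.2 + 6 * u.2 * v.1 + 2 * u.2 * v.2

/-- The linear map `ℤ² → ℚ²` sending `(m,n)` to `m•H + n•E` where
`H = (3/5, 1/5)` and `E = (2/5, -1/5)`. -/
def fPlus : ℤ × ℤ →+ ℚ × ℚ where
  toFun p := ((3 * p.1 + 2 * p.2) / 5, (p.1 - p.2) / 5)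
  map_zero' := by simp
  map_add' p q := by
    refine Prod.ext ?_ ?_ <;> simp <;> push_cast <;> ring

lemma fPlus_mem (p : ℤ × ℤ) : fPlus p ∈ NplusLat := by
  have hH : ((3 / 5 : ℚ), (1 / 5 : ℚ)) ∈ NplusLat :=
    AddSubgroup.subset_closure (by simp)
  have h1 : ((1 : ℚ), (0 : ℚ)) ∈ NplusLat :=
    AddSubgroup.subset_closure (by simp)
  have hE : ((2 / 5 : ℚ), (-1 / 5 : ℚ)) ∈ NplusLat := by
    have := sub_mem h1 hH
    convert this using 2 <;> norm_num
  have : p.1 • ((3 / 5 : ℚ), (1 / 5 : ℚ)) + p.2 • ((2 / 5 : ℚ), (-1 / 5 : ℚ)) ∈ NplusLat :=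
    add_mem (zsmul_mem hH p.1) (zsmul_mem hE p.2)
  convert this using 1
  refine Prod.ext ?_ ?_ <;> simp [fPlus, Prod.smul_def] <;> push_cast <;> ring

lemma fPlus_surj (x : ℚ × ℚ) (hx : x ∈ NplusLat) : ∃ p : ℤ × ℤ, fPlus p = x := by
  induction hx using AddSubgroup.closure_induction with
  | mem y hy =>
      rcases hy with h | h | h
      · exact ⟨(1, 1), by subst h; refine Prod.ext ?_ ?_ <;> simp [fPlus] <;> norm_num⟩
      · exact ⟨(2, -3), by subst h; refine Prod.ext ?_ ?_ <;> simp [fPlus] <;> norm_num⟩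
      · exact ⟨(1, 0), by subst h; refine Prod.ext ?_ ?_ <;> simp [fPlus] <;> norm_num⟩
  | zero => exact ⟨0, by simp⟩
  | add a b _ _ ha hb =>
      obtain ⟨p, hp⟩ := ha; obtain ⟨q, hq⟩ := hb
      exact ⟨p + q, by simp [hp, hq]⟩
  | neg a _ ha =>
      obtain ⟨p, hp⟩ := ha
      exact ⟨-p, by simp [hp]⟩

lemma fPlus_inj : Function.Injective fPlus := by
  intro p q h
  have h1 := congrArg Prod.fst h
  have h2 := congrArg Prod.snd h
  simp only [fPlus, AddMonoidHom.coe_mk, ZeroHom.coe_mk, div_eq_div_iff (by norm_num : (5:ℚ) ≠ 0)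
    (by norm_num : (5:ℚ) ≠ 0)] at h1 h2
  have e1 : ((3 * p.1 + 2 * p.2) * 5 : ℤ) = (3 * q.1 + 2 * q.2) * 5 := by exact_mod_cast h1
  have e2 : ((p.1 - p.2) * 5 : ℤ) = (q.1 - q.2) * 5 := by exact_mod_cast h2
  refine Prod.ext ?_ ?_ <;> omega

lemma fPlus_gram (u v : ℤ × ℤ) : bQp (fPlus u) (fPlus v) = gPlus u v := by
  simp only [bQp, gPlus, fPlus, AddMonoidHom.coe_mk, ZeroHom.coe_mk]
  push_cast
  ring

/-- `N₊ = ℤ² + (1/5)(3,1)ℤ` with form `diag(20,−30)` is an even integral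
lattice isomorphic to the lattice with Gram matrix `[[6,6],[6,2]]`. -/
theorem NplusLat_even_integral_isometric :
    (∀ x ∈ NplusLat, ∀ y ∈ NplusLat, ∃ n : ℤ, bQp x y = n) ∧
    (∀ x ∈ NplusLat, ∃ n : ℤ, bQp x x = 2 * n) ∧
    (∃ e : (ℤ × ℤ) ≃+ NplusLat,
      ∀ u v : ℤ × ℤ, bQp (e u : ℚ × ℚ) (e v : ℚ × ℚ) = gPlus u v) := by
  refine ⟨?_, ?_, ?_⟩
  · intro x hx y hy
    obtain ⟨p, hp⟩ := fPlus_surj x hx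
    obtain ⟨q, hq⟩ := fPlus_surj y hy
    exact ⟨gPlus p q, by rw [← hp, ← hq, fPlus_gram]⟩
  · intro x hx
    obtain ⟨p, hp⟩ := fPlus_surj x hx
    refine ⟨3 * p.1 * p.1 + 6 * p.1 * p.2 + p.2 * p.2, ?_⟩
    rw [← hp, fPlus_gram]
    simp [gPlus]; push_cast; ring
  · have hsurj : Function.Surjective
        ((fPlus.codRestrict NplusLat fPlus_mem : ℤ × ℤ →+ NplusLat)) := by
      rintro ⟨x, hx⟩
      obtain ⟨p, hp⟩ := fPlus_surj x hx
      exact ⟨p, Subtype.ext hp⟩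
    have hinj : Function.Injective
        ((fPlus.codRestrict NplusLat fPlus_mem : ℤ × ℤ →+ NplusLat)) := by
      intro p q h
      exact fPlus_inj (congrArg Subtype.val h)
    refine ⟨AddEquiv.ofBijective _ ⟨hinj, hsurj⟩, fun u v => ?_⟩
    have : ∀ w : ℤ × ℤ,
        ((AddEquiv.ofBijective _ ⟨hinj, hsurj⟩ w : NplusLat) : ℚ × ℚ) = fPlus w := fun w => rfl
    rw [this, this, fPlus_gram]
end

section
/- Inside the lattice W = ℤ³ + (1/5)(3,0,1)ℤ + (1/3)(0,2,1)ℤ with form diag(20,30,−30), the sublattices N₊ = span of first and third coordinates with glue (1/5)(3,0,1), and N₋ = span of second and third coordinates with glue (1/3)(0,2,1), satisfy N₊ ∩ N₋ = ℤ·e₃ where e₃² = −30, and W is generated by N₊ and N₋. -/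
/-- The bilinear form `diag(20, 30, −30)` on `ℚ³`. -/
def bW3 (x y : Fin 3 → ℚ) : ℚ := 20 * x 0 * y 0 + 30 * x 1 * y 1 - 30 * x 2 * y 2

/-- The overlattice `W = ℤ³ + (1/5)(3,0,1)ℤ + (1/3)(0,2,1)ℤ`. -/
def Wlat3 : AddSubgroup (Fin 3 → ℚ) :=
  AddSubgroup.closure {![1, 0, 0], ![0, 1, 0], ![0, 0, 1],
    ![3 / 5, 0, 1 / 5], ![0, 2 / 3, 1 / 3]}

/-- `N₊ = ℤe₁ + ℤe₃ + ℤ(3/5,0,1/5)`. -/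
def NplusIn : AddSubgroup (Fin 3 → ℚ) :=
  AddSubgroup.closure {![1, 0, 0], ![0, 0, 1], ![3 / 5, 0, 1 / 5]}

/-- `N₋ = ℤe₂ + ℤe₃ + ℤ(0,2/3,1/3)`. -/
def NminusIn : AddSubgroup (Fin 3 → ℚ) :=
  AddSubgroup.closure {![0, 1, 0], ![0, 0, 1], ![0, 2 / 3, 1 / 3]}

lemma nplus_inv : ∀ x ∈ NplusIn, x 1 = 0 ∧ ∃ n : ℤ, x 2 - 2 * x 0 = n := by
  intro x hx
  refine AddSubgroup.closure_induction ?_ ?_ ?_ ?_ hx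
  · intro y hy
    simp only [Set.mem_insert_iff, Set.mem_singleton_iff] at hy
    rcases hy with rfl | rfl | rfl
    · exact ⟨rfl, ⟨-2, by norm_num [Matrix.cons_val_two, Matrix.tail_cons, Matrix.head_cons]⟩⟩
    · exact ⟨rfl, ⟨1, by norm_num [Matrix.cons_val_two, Matrix.tail_cons, Matrix.head_cons]⟩⟩
    · exact ⟨rfl, ⟨-1, by norm_num [Matrix.cons_val_two, Matrix.tail_cons, Matrix.head_cons]⟩⟩
  · exact ⟨rfl, ⟨0, by norm_num⟩⟩
  · rintro a b _ _ ⟨ha1, na, hna⟩ ⟨hb1, nb, hnb⟩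
    refine ⟨by simp [ha1, hb1], ⟨na + nb, ?_⟩⟩
    push_cast
    simp only [Pi.add_apply]
    linarith
  · rintro a _ ⟨ha1, na, hna⟩
    refine ⟨by simp [ha1], ⟨-na, ?_⟩⟩
    push_cast
    simp only [Pi.neg_apply]
    linarith

lemma nminus_inv : ∀ x ∈ NminusIn, x 0 = 0 ∧ ∃ n : ℤ, x 2 - 2 * x 1 = n := by
  intro x hx
  refine AddSubgroup.closure_induction ?_ ?_ ?_ ?_ hx
  · intro y hy
    simp only [Set.mem_insert_iff, Set.mem_singleton_iff] at hy
    rcases hy with rfl | rfl | rfl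
    · exact ⟨rfl, ⟨-2, by norm_num [Matrix.cons_val_two, Matrix.tail_cons, Matrix.head_cons]⟩⟩
    · exact ⟨rfl, ⟨1, by norm_num [Matrix.cons_val_two, Matrix.tail_cons, Matrix.head_cons]⟩⟩
    · exact ⟨rfl, ⟨-1, by norm_num [Matrix.cons_val_two, Matrix.tail_cons, Matrix.head_cons]⟩⟩
  · exact ⟨rfl, ⟨0, by norm_num⟩⟩
  · rintro a b _ _ ⟨ha1, na, hna⟩ ⟨hb1, nb, hnb⟩
    refine ⟨by simp [ha1, hb1], ⟨na + nb, ?_⟩⟩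
    push_cast
    simp only [Pi.add_apply]
    linarith
  · rintro a _ ⟨ha1, na, hna⟩
    refine ⟨by simp [ha1], ⟨-na, ?_⟩⟩
    push_cast
    simp only [Pi.neg_apply]
    linarith

/-- `W` is the orthogonal pushout of `N₊` and `N₋` along `R = (−30)`:
`N₊ + N₋ = W`, `N₊ ∩ N₋ = ℤe₃` with `e₃² = −30`, and the generators of `N₊`
pair with those of `N₋` only through the shared `e₃` component. -/
theorem W_orthogonal_pushout :
    NplusIn ⊔ NminusIn = Wlat3 ∧
    NplusIn ⊓ NminusIn = AddSubgroup.closure {![0, 0, 1]} ∧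
    bW3 ![0, 0, 1] ![0, 0, 1] = -30 ∧
    bW3 ![1, 0, 0] ![0, 1, 0] = 0 ∧
    bW3 ![1, 0, 0] ![0, 2 / 3, 1 / 3] = 0 ∧
    bW3 ![3 / 5, 0, 1 / 5] ![0, 1, 0] = 0 ∧
    bW3 ![3 / 5, 0, 1 / 5] ![0, 2 / 3, 1 / 3] = (1 / 5) * (1 / 3) * (-30) := by
  refine ⟨?_, ?_, by norm_num [bW3, Matrix.cons_val_two, Matrix.tail_cons, Matrix.head_cons], by norm_num [bW3, Matrix.cons_val_two, Matrix.tail_cons, Matrix.head_cons], by norm_num [bW3, Matrix.cons_val_two, Matrix.tail_cons, Matrix.head_cons],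
    by norm_num [bW3, Matrix.cons_val_two, Matrix.tail_cons, Matrix.head_cons], by norm_num [bW3, Matrix.cons_val_two, Matrix.tail_cons, Matrix.head_cons]⟩
  · apply le_antisymm
    · refine sup_le ?_ ?_
      · rw [NplusIn, AddSubgroup.closure_le]
        intro y hy
        simp only [Set.mem_insert_iff, Set.mem_singleton_iff] at hy
        rcases hy with rfl | rfl | rfl
        · exact AddSubgroup.subset_closure (Or.inl rfl)
        · exact AddSubgroup.subset_closure (Or.inr (Or.inr (Or.inl rfl)))
        · exact AddSubgroup.subset_closure
            (Or.inr (Or.inr (Or.inr (Or.inl rfl))))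
      · rw [NminusIn, AddSubgroup.closure_le]
        intro y hy
        simp only [Set.mem_insert_iff, Set.mem_singleton_iff] at hy
        rcases hy with rfl | rfl | rfl
        · exact AddSubgroup.subset_closure (Or.inr (Or.inl rfl))
        · exact AddSubgroup.subset_closure (Or.inr (Or.inr (Or.inl rfl)))
        · exact AddSubgroup.subset_closure
            (Or.inr (Or.inr (Or.inr (Or.inr rfl))))
    · rw [Wlat3, AddSubgroup.closure_le]
      intro y hy
      simp only [Set.mem_insert_iff, Set.mem_singleton_iff] at hy
      rcases hy with rfl | rfl | rfl | rfl | rfl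
      · exact AddSubgroup.mem_sup_left (AddSubgroup.subset_closure (Or.inl rfl))
      · exact AddSubgroup.mem_sup_right (AddSubgroup.subset_closure (Or.inl rfl))
      · exact AddSubgroup.mem_sup_left
          (AddSubgroup.subset_closure (Or.inr (Or.inl rfl)))
      · exact AddSubgroup.mem_sup_left
          (AddSubgroup.subset_closure (Or.inr (Or.inr rfl)))
      · exact AddSubgroup.mem_sup_right
          (AddSubgroup.subset_closure (Or.inr (Or.inr rfl)))
  · apply le_antisymm
    · rintro x ⟨hxp, hxm⟩
      obtain ⟨h1, n, hn⟩ := nplus_inv x hxp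
      obtain ⟨h0, _⟩ := nminus_inv x hxm
      have hx2 : x 2 = n := by rw [h0] at hn; linarith
      have : x = n • ![0, 0, 1] := by
        funext i
        fin_cases i <;> simp [h0, h1, hx2]
      rw [this]
      exact AddSubgroup.zsmul_mem _
        (AddSubgroup.subset_closure (Set.mem_singleton _)) n
    · rw [AddSubgroup.closure_le]
      intro y hy
      rw [Set.mem_singleton_iff] at hy
      subst hy
      exact ⟨AddSubgroup.subset_closure (Or.inr (Or.inl rfl)),
        AddSubgroup.subset_closure (Or.inr (Or.inl rfl))⟩
end
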